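/- arXiv:0804.2841 — 2 statements merged into one kernel-verified Lean document; each statement's English description precedes it below -/
import Mathlib

section
/- Let X be a compact metrizable topological space and let α be an ordinal with D^{α+1}(X) = D^α(X). Then either D^α(X) is empty or D^α(X) has cardinality exactly 2^{ℵ₀}. -/
open scoped BoundedContinuousFunction


universe u

/-- `cbD A` is the set of points of `A` that are accumulation points of `A`,
i.e. the non-isolated points of the subspace `A`. -/
def cbD {X : Type u} [TopologicalSpace X] (A : Set X) : Set X :=
  A ∩ derivedSet A

/-- Transfinite iterates of the derived-set operator:
`cbIter A 0 = A`, `cbIter A (α+1) = cbD (cbIter A α)`, and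
`cbIter A α = ⋂_{β<α} cbIter A β` at limit ordinals. -/
noncomputable def cbIter {X : Type u} [TopologicalSpace X] (A : Set X) (o : Ordinal.{u}) :
    Set X :=
  Ordinal.limitRecOn o A (fun _ ih => cbD ih)
    (fun o _ ih => ⋂ (b : Ordinal.{u}) (h : b < o), ih b h)

lemma cbIter_succ {X : Type u} [TopologicalSpace X] (A : Set X) (o : Ordinal.{u}) :
    cbIter A (o + 1) = cbD (cbIter A o) := by
  simp [cbIter, Ordinal.limitRecOn_succ]

lemma cbIter_isClosed {X : Type u} [TopologicalSpace X] [T1Space X] {A : Set X}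
    (hA : IsClosed A) (o : Ordinal.{u}) : IsClosed (cbIter A o) := by
  induction o using Ordinal.limitRecOn with
  | zero => simpa [cbIter] using hA
  | add_one o ih =>
    rw [cbIter_succ]
    exact ih.inter (isClosed_derivedSet _)
  | limit o ho ih =>
    rw [cbIter, Ordinal.limitRecOn_limit _ _ _ _ ho]
    exact isClosed_iInter fun b => isClosed_iInter fun hb => ih b hb

/-- If `X` is a compact metrizable space and `α` is an ordinal with
`D^{α+1}(X) = D^α(X)`, then `D^α(X)` is empty or has cardinality `2^ℵ₀`. -/
theorem stable_derived_set_empty_or_continuum (X : Type u) [TopologicalSpace X]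
    [CompactSpace X] [TopologicalSpace.MetrizableSpace X] (α : Ordinal.{u})
    (h : cbIter (Set.univ : Set X) (α + 1) = cbIter (Set.univ : Set X) α) :
    cbIter (Set.univ : Set X) α = ∅ ∨
      Cardinal.mk ↥(cbIter (Set.univ : Set X) α) = Cardinal.continuum.{u} := by
  letI : MetricSpace X := TopologicalSpace.metrizableSpaceMetric X
  set A := cbIter (Set.univ : Set X) α with hAdef
  have hclosed : IsClosed A := cbIter_isClosed isClosed_univ α
  have hsub : A ⊆ derivedSet A := by
    intro x hx
    have : x ∈ cbD A := by rw [← cbIter_succ, h]; exact hx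
    exact this.2
  have hperf : Perfect A := ⟨hclosed, fun x hx => hsub hx⟩
  rcases A.eq_empty_or_nonempty with hA | hA
  · exact Or.inl hA
  · right
    obtain ⟨f, hrange, -, hinj⟩ := hperf.exists_nat_bool_injection hA
    refine le_antisymm ?_ ?_
    · -- upper bound: X embeds in ℕ →ᵇ ℝ
      obtain ⟨g, hg⟩ := TopologicalSpace.exists_embedding_l_infty X
      have h1 : Cardinal.lift.{0} (Cardinal.mk A) ≤
          Cardinal.lift.{u} (Cardinal.mk (ℕ →ᵇ ℝ)) :=
        Cardinal.lift_mk_le'.2 ⟨⟨fun x => g x, fun a b hab => Subtype.ext (hg.injective hab)⟩⟩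
      have h2 : Cardinal.mk (ℕ →ᵇ ℝ) ≤ Cardinal.continuum.{0} := by
        have : Cardinal.mk (ℕ →ᵇ ℝ) ≤ Cardinal.mk (ℕ → ℝ) :=
          Cardinal.mk_le_of_injective (f := fun h => ⇑h) (fun a b hab => by
            ext n; exact congrFun hab n)
        refine this.trans ?_
        rw [Cardinal.mk_arrow, Cardinal.lift_uzero, Cardinal.lift_uzero, Cardinal.mk_real,
          Cardinal.mk_nat, Cardinal.continuum_power_aleph0]
      calc Cardinal.mk A = Cardinal.lift.{0} (Cardinal.mk A) := (Cardinal.lift_uzero _).symm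
        _ ≤ Cardinal.lift.{u} (Cardinal.mk (ℕ →ᵇ ℝ)) := h1
        _ ≤ Cardinal.lift.{u} Cardinal.continuum.{0} := Cardinal.lift_le.2 h2
        _ = Cardinal.continuum.{u} := Cardinal.lift_continuum
    · -- lower bound: Cantor set injects into A
      have h1 : Cardinal.lift.{u} (Cardinal.mk (ℕ → Bool)) ≤
          Cardinal.lift.{0} (Cardinal.mk A) :=
        Cardinal.lift_mk_le'.2 ⟨⟨fun x => ⟨f x, hrange ⟨x, rfl⟩⟩,
          fun a b hab => hinj (congrArg Subtype.val hab)⟩⟩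
      have h2 : Cardinal.mk (ℕ → Bool) = Cardinal.continuum.{0} := by
        rw [Cardinal.mk_arrow, Cardinal.lift_uzero, Cardinal.lift_uzero, Cardinal.mk_bool,
          Cardinal.mk_nat, Cardinal.two_power_aleph0]
      calc Cardinal.continuum.{u} = Cardinal.lift.{u} Cardinal.continuum.{0} :=
            Cardinal.lift_continuum.symm
        _ = Cardinal.lift.{u} (Cardinal.mk (ℕ → Bool)) := by rw [h2]
        _ ≤ Cardinal.lift.{0} (Cardinal.mk A) := h1
        _ = Cardinal.mk A := Cardinal.lift_uzero _
end

section
/- For every n ≥ 1, the set L_n of normal subgroups N of F_n = FreeGroup (Fin n) such that the quotient F_n/N is fully residually free is a closed subset of G_n; consequently L_n is a compact topological space. -/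
set_option maxHeartbeats 1000000
set_option synthInstance.maxHeartbeats 400000

/-- The characteristic function of a subset, identifying `2^G` with `G → Bool`. -/
noncomputable def chi {G : Type*} (s : Set G) : G → Bool :=
  fun g => @decide (g ∈ s) (Classical.propDecidable _)

/-- `GnSet n` is the set of (characteristic functions of) carriers of normal
subgroups of the free group `F_n = FreeGroup (Fin n)`, viewed inside the product
space `F_n → Bool` (with `Bool` discrete). -/
def GnSet (n : ℕ) : Set (FreeGroup (Fin n) → Bool) :=
  {f | ∃ N : Subgroup (FreeGroup (Fin n)), N.Normal ∧ f = chi (N : Set (FreeGroup (Fin n)))}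

/-- A group `L` is fully residually free if for every finite subset `S ⊆ L` there
is a homomorphism `φ` to a free group of rank 2 with `φ s ≠ 1` for all `s ∈ S`, `s ≠ 1`. -/
def FullyResiduallyFree (L : Type*) [Group L] : Prop :=
  ∀ S : Finset L, ∃ φ : L →* FreeGroup (Fin 2), ∀ s ∈ S, s ≠ 1 → φ s ≠ 1

/-- `LnSet n` is the set of (characteristic functions of) normal subgroups `N` of
`F_n` such that `F_n / N` is fully residually free. -/
def LnSet (n : ℕ) : Set (FreeGroup (Fin n) → Bool) :=
  {f | ∃ N : Subgroup (FreeGroup (Fin n)), ∃ hN : N.Normal,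
    @FullyResiduallyFree (FreeGroup (Fin n) ⧸ N) (@QuotientGroup.Quotient.group _ _ N hN) ∧
      f = chi (N : Set (FreeGroup (Fin n)))}

open Matrix

section PingPong


abbrev SL2Z := Matrix.SpecialLinearGroup (Fin 2) ℤ

def sanovA : SL2Z := ⟨!![1, 2; 0, 1], by norm_num [Matrix.det_fin_two_of]⟩
def sanovB : SL2Z := ⟨!![1, 0; 2, 1], by norm_num [Matrix.det_fin_two_of]⟩

lemma sanovA_inv : sanovA⁻¹ = ⟨!![1, -2; 0, 1], by norm_num [Matrix.det_fin_two_of]⟩ := by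
  apply inv_eq_of_mul_eq_one_right
  ext i j
  fin_cases i <;> fin_cases j <;>
    simp [sanovA, Matrix.SpecialLinearGroup.coe_mul, Matrix.mul_apply, Fin.sum_univ_two] <;> rfl

lemma sanovB_inv : sanovB⁻¹ = ⟨!![1, 0; -2, 1], by norm_num [Matrix.det_fin_two_of]⟩ := by
  apply inv_eq_of_mul_eq_one_right
  ext i j
  fin_cases i <;> fin_cases j <;>
    simp [sanovB, Matrix.SpecialLinearGroup.coe_mul, Matrix.mul_apply, Fin.sum_univ_two] <;> rfl

/-- Nonzero integer vectors, the ping-pong board. -/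
def PP : Type := {v : Fin 2 → ℤ // v ≠ 0}

noncomputable instance : MulAction SL2Z PP where
  smul g v := ⟨g.1 *ᵥ v.1, by
    intro h
    apply v.2
    have h2 : (g⁻¹ : SL2Z).1 *ᵥ (g.1 *ᵥ v.1) = 0 := by rw [h, Matrix.mulVec_zero]
    rwa [Matrix.mulVec_mulVec, ← Matrix.SpecialLinearGroup.coe_mul, inv_mul_cancel,
      Matrix.SpecialLinearGroup.coe_one, Matrix.one_mulVec] at h2⟩
  one_smul v := Subtype.ext (by
    show (1 : SL2Z).1 *ᵥ v.1 = v.1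
    rw [Matrix.SpecialLinearGroup.coe_one, Matrix.one_mulVec])
  mul_smul g h v := Subtype.ext (by
    show (g * h).1 *ᵥ v.1 = g.1 *ᵥ (h.1 *ᵥ v.1)
    rw [Matrix.mulVec_mulVec, Matrix.SpecialLinearGroup.coe_mul])

lemma PP.smul_coe (g : SL2Z) (v : PP) : (g • v).1 = g.1 *ᵥ v.1 := rfl

lemma smul_coord (M : Matrix (Fin 2) (Fin 2) ℤ) (v : Fin 2 → ℤ) :
    M *ᵥ v = ![M 0 0 * v 0 + M 0 1 * v 1, M 1 0 * v 0 + M 1 1 * v 1] := by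
  funext k
  fin_cases k <;> simp [Matrix.mulVec, Fin.sum_univ_two, Matrix.vecHead, Matrix.vecTail]


def sX : Fin 2 → Set PP :=
  ![{v | v.1 1 * (v.1 0 - v.1 1) ≥ 0}, {v | v.1 0 * (v.1 1 - v.1 0) > 0 ∨ v.1 0 = 0}]
def sY : Fin 2 → Set PP :=
  ![{v | v.1 1 * (v.1 0 + v.1 1) < 0}, {v | v.1 0 ≠ 0 ∧ v.1 0 * (v.1 1 + v.1 0) ≤ 0}]

lemma vne (v : PP) : v.1 0 ≠ 0 ∨ v.1 1 ≠ 0 := by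
  by_contra h
  push_neg at h
  apply v.2
  funext k; fin_cases k <;> simp [h.1, h.2]

noncomputable def sanov : Fin 2 → SL2Z := ![sanovA, sanovB]

lemma smulA (v : PP) : (sanovA • v).1 = ![v.1 0 + 2 * v.1 1, v.1 1] := by
  rw [PP.smul_coe, smul_coord]
  funext k; fin_cases k <;> simp [sanovA] <;> ring

lemma smulB (v : PP) : (sanovB • v).1 = ![v.1 0, 2 * v.1 0 + v.1 1] := by
  rw [PP.smul_coe, smul_coord]
  funext k; fin_cases k <;> simp [sanovB] <;> ring

lemma smulAinv (v : PP) : (sanovA⁻¹ • v).1 = ![v.1 0 - 2 * v.1 1, v.1 1] := by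
  rw [PP.smul_coe, sanovA_inv, smul_coord]
  funext k; fin_cases k <;> simp <;> ring

lemma smulBinv (v : PP) : (sanovB⁻¹ • v).1 = ![v.1 0, v.1 1 - 2 * v.1 0] := by
  rw [PP.smul_coe, sanovB_inv, smul_coord]
  funext k; fin_cases k <;> simp <;> ring

lemma disj_helper {s t : Set PP}
    (h : ∀ v : PP, (v.1 0 ≠ 0 ∨ v.1 1 ≠ 0) → v ∈ s → v ∈ t → False) : Disjoint s t := by
  rw [Set.disjoint_left]
  exact fun {v} hs ht => (h v (vne v) hs ht).elim

lemma mem_sX0 (v : PP) : v ∈ sX 0 ↔ v.1 1 * (v.1 0 - v.1 1) ≥ 0 := Iff.rfl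
lemma mem_sX1 (v : PP) : v ∈ sX 1 ↔ (v.1 0 * (v.1 1 - v.1 0) > 0 ∨ v.1 0 = 0) := Iff.rfl
lemma mem_sY0 (v : PP) : v ∈ sY 0 ↔ v.1 1 * (v.1 0 + v.1 1) < 0 := Iff.rfl
lemma mem_sY1 (v : PP) : v ∈ sY 1 ↔ (v.1 0 ≠ 0 ∧ v.1 0 * (v.1 1 + v.1 0) ≤ 0) := Iff.rfl

lemma disj_X0_X1 : Disjoint (sX 0) (sX 1) := by
  apply disj_helper
  intro v hne h0 h1
  rw [mem_sX0] at h0; rw [mem_sX1] at h1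
  rcases h1 with h1 | h1
  · nlinarith [sq_nonneg (v.1 1 - v.1 0)]
  · rcases hne with h | h
    · exact h h1
    · rw [h1] at h0; nlinarith [mul_self_pos.mpr h]

lemma disj_Y0_Y1 : Disjoint (sY 0) (sY 1) := by
  apply disj_helper
  intro v _ h0 h1
  rw [mem_sY0] at h0; rw [mem_sY1] at h1
  nlinarith [sq_nonneg (v.1 0 + v.1 1)]

lemma disj_X0_Y0 : Disjoint (sX 0) (sY 0) := by
  apply disj_helper
  intro v _ h0 h1
  rw [mem_sX0] at h0; rw [mem_sY0] at h1
  nlinarith [sq_nonneg (v.1 1)]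

lemma disj_X0_Y1 : Disjoint (sX 0) (sY 1) := by
  apply disj_helper
  intro v hne h0 h1
  rw [mem_sX0] at h0; rw [mem_sY1] at h1
  obtain ⟨hx, h1⟩ := h1
  nlinarith [mul_self_pos.mpr hx, sq_nonneg (v.1 1)]

lemma disj_X1_Y0 : Disjoint (sX 1) (sY 0) := by
  apply disj_helper
  intro v hne h0 h1
  rw [mem_sX1] at h0; rw [mem_sY0] at h1
  rcases h0 with h0 | h0
  · nlinarith [sq_nonneg (v.1 0), sq_nonneg (v.1 1)]
  · rw [h0] at h1; nlinarith [sq_nonneg (v.1 1)]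

lemma disj_X1_Y1 : Disjoint (sX 1) (sY 1) := by
  apply disj_helper
  intro v _ h0 h1
  rw [mem_sX1] at h0; rw [mem_sY1] at h1
  obtain ⟨hx, h1⟩ := h1
  rcases h0 with h0 | h0
  · nlinarith [mul_self_pos.mpr hx]
  · exact hx h0

lemma sanov_ping_pong : Function.Injective (FreeGroup.lift sanov) := by
  apply FreeGroup.injective_lift_of_ping_pong sanov sX sY
  · intro i
    fin_cases i
    · exact ⟨⟨![1, 0], by intro h; simpa using congrFun h 0⟩, (mem_sX0 _).2 (by simp)⟩
    · exact ⟨⟨![0, 1], by intro h; simpa using congrFun h 1⟩, (mem_sX1 _).2 (by simp)⟩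
  · intro i j hij
    fin_cases i <;> fin_cases j <;>
      first
        | exact absurd rfl hij
        | exact disj_X0_X1
        | exact disj_X0_X1.symm
  · intro i j hij
    fin_cases i <;> fin_cases j <;>
      first
        | exact absurd rfl hij
        | exact disj_Y0_Y1
        | exact disj_Y0_Y1.symm
  · intro i j
    fin_cases i <;> fin_cases j
    · exact disj_X0_Y0
    · exact disj_X0_Y1
    · exact disj_X1_Y0
    · exact disj_X1_Y1
  · -- a i • (Y i)ᶜ ⊆ X i
    intro i
    fin_cases i
    · rintro w ⟨v, hv, rfl⟩
      replace hv : v ∉ sY 0 := hv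
      rw [mem_sY0, not_lt] at hv
      show sanovA • v ∈ sX 0
      rw [mem_sX0, smulA]
      simp only [Matrix.cons_val_zero, Matrix.cons_val_one, Matrix.head_cons]
      nlinarith
    · rintro w ⟨v, hv, rfl⟩
      replace hv : v ∉ sY 1 := hv
      rw [mem_sY1, not_and_or, not_not, not_le] at hv
      show sanovB • v ∈ sX 1
      rw [mem_sX1, smulB]
      simp only [Matrix.cons_val_zero, Matrix.cons_val_one, Matrix.head_cons]
      rcases hv with hv | hv
      · exact Or.inr hv
      · left; nlinarith
  · -- a⁻¹ i • (X i)ᶜ ⊆ Y i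
    intro i
    fin_cases i
    · rintro w ⟨v, hv, rfl⟩
      replace hv : v ∉ sX 0 := hv
      rw [mem_sX0, not_le] at hv
      show sanovA⁻¹ • v ∈ sY 0
      rw [mem_sY0, smulAinv]
      simp only [Matrix.cons_val_zero, Matrix.cons_val_one, Matrix.head_cons]
      nlinarith
    · rintro w ⟨v, hv, rfl⟩
      replace hv : v ∉ sX 1 := hv
      rw [mem_sX1, not_or, not_lt] at hv
      show sanovB⁻¹ • v ∈ sY 1
      rw [mem_sY1, smulBinv]
      simp only [Matrix.cons_val_zero, Matrix.cons_val_one, Matrix.head_cons]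
      exact ⟨hv.2, by nlinarith [hv.1]⟩


noncomputable def rho : FreeGroup (Fin 2) →* SL2Z := FreeGroup.lift sanov

lemma rho_injective : Function.Injective rho := sanov_ping_pong

end PingPong

open MvPolynomial


section Generic
variable (n : ℕ)

abbrev PRing (n : ℕ) := MvPolynomial (Fin n × Fin 2 × Fin 2) ℤ

noncomputable def detPoly (i : Fin n) : PRing n :=
  X (i, 0, 0) * X (i, 1, 1) - X (i, 0, 1) * X (i, 1, 0)

noncomputable def Jdet : Ideal (PRing n) := Ideal.span (Set.range fun i => detPoly n i - 1)

abbrev QRing (n : ℕ) := PRing n ⧸ Jdet n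

noncomputable def genM (i : Fin n) : Matrix (Fin 2) (Fin 2) (QRing n) :=
  fun k l => Ideal.Quotient.mk (Jdet n) (X (i, k, l))

lemma det_genM (i : Fin n) : (genM n i).det = 1 := by
  rw [Matrix.det_fin_two]
  have h : Ideal.Quotient.mk (Jdet n) (detPoly n i - 1) = 0 :=
    Ideal.Quotient.eq_zero_iff_mem.2 (Ideal.subset_span ⟨i, rfl⟩)
  have h2 : Ideal.Quotient.mk (Jdet n) (detPoly n i) = 1 := by
    rwa [_root_.map_sub, _root_.map_one, sub_eq_zero] at h
  calc (genM n i) 0 0 * (genM n i) 1 1 - (genM n i) 0 1 * (genM n i) 1 0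
      = Ideal.Quotient.mk (Jdet n) (detPoly n i) := by
        rw [show detPoly n i = X (i,0,0) * X (i,1,1) - X (i,0,1) * X (i,1,0) from rfl,
          _root_.map_sub, _root_.map_mul, _root_.map_mul]
        rfl
    _ = 1 := h2

noncomputable def genHom : FreeGroup (Fin n) →* Matrix.SpecialLinearGroup (Fin 2) (QRing n) :=
  FreeGroup.lift fun i => ⟨genM n i, det_genM n i⟩

noncomputable def evalRH (ψ : FreeGroup (Fin n) →* FreeGroup (Fin 2)) : QRing n →+* ℤ :=
  Ideal.Quotient.lift (Jdet n)
    (MvPolynomial.eval fun p => (rho (ψ (FreeGroup.of p.1))).1 p.2.1 p.2.2)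
    (by
      intro a ha
      have hle : Jdet n ≤ RingHom.ker (MvPolynomial.eval fun p : Fin n × Fin 2 × Fin 2 =>
          (rho (ψ (FreeGroup.of p.1))).1 p.2.1 p.2.2) := by
        rw [Jdet, Ideal.span_le]
        rintro _ ⟨i, rfl⟩
        rw [SetLike.mem_coe, RingHom.mem_ker, _root_.map_sub, _root_.map_one, sub_eq_zero]
        rw [show (detPoly n i : PRing n) = X (i,0,0) * X (i,1,1) - X (i,0,1) * X (i,1,0) from rfl]
        rw [_root_.map_sub, _root_.map_mul, _root_.map_mul]
        simp only [MvPolynomial.eval_X]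
        have h2 := (rho (ψ (FreeGroup.of i))).2
        rw [Matrix.det_fin_two] at h2
        exact h2
      exact RingHom.mem_ker.1 (hle ha))

lemma evalRH_mk (ψ : FreeGroup (Fin n) →* FreeGroup (Fin 2)) (p : PRing n) :
    evalRH n ψ (Ideal.Quotient.mk (Jdet n) p)
      = MvPolynomial.eval (fun p : Fin n × Fin 2 × Fin 2 =>
          (rho (ψ (FreeGroup.of p.1))).1 p.2.1 p.2.2) p :=
  Ideal.Quotient.lift_mk _ _ _

lemma genHom_spec (ψ : FreeGroup (Fin n) →* FreeGroup (Fin 2)) :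
    (Matrix.SpecialLinearGroup.map (evalRH n ψ)).comp (genHom n) = rho.comp ψ := by
  apply FreeGroup.ext_hom
  intro i
  apply Subtype.ext
  ext k l
  simp only [MonoidHom.comp_apply, genHom, FreeGroup.lift_apply_of,
    Matrix.SpecialLinearGroup.map_apply_coe, RingHom.mapMatrix_apply, Matrix.map_apply]
  erw [FreeGroup.lift_apply_of]
  show evalRH n ψ (genM n i k l) = _
  rw [show genM n i k l = Ideal.Quotient.mk (Jdet n) (X (i, k, l)) from rfl, evalRH_mk]
  simp

/-- A finitely generated span of a set is spanned by a finite subset of the set. -/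
lemma span_fg_subset {R : Type*} [CommRing R] (S : Set R) (h : (Ideal.span S).FG) :
    ∃ T : Finset R, ↑T ⊆ S ∧ Ideal.span S ≤ Ideal.span (T : Set R) := by
  classical
  obtain ⟨T, hT⟩ := h
  have h1 : ∀ t ∈ T, t ∈ Ideal.span S := by
    intro t ht
    rw [← hT]
    exact Ideal.subset_span ht
  choose f hf1 hf2 using fun (t : T) => Submodule.mem_span_finite_of_mem_span (h1 t t.2)
  refine ⟨T.attach.biUnion f, ?_, ?_⟩
  · intro x hx
    simp only [Finset.coe_biUnion, Finset.mem_coe, Finset.mem_attach, Set.iUnion_true,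
      Set.mem_iUnion] at hx
    obtain ⟨t, ht⟩ := hx
    exact hf1 t ht
  · rw [← hT]
    rw [Ideal.span_le]
    intro t ht
    refine Submodule.span_mono ?_ (hf2 ⟨t, ht⟩)
    intro x hx
    simp only [Finset.coe_biUnion, Finset.mem_coe, Finset.mem_attach, Set.iUnion_true,
      Set.mem_iUnion]
    exact ⟨⟨t, ht⟩, hx⟩

/-- equations of a group element -/
noncomputable def eqnsOf (g : FreeGroup (Fin n)) : Set (QRing n) :=
  Set.range fun kl : Fin 2 × Fin 2 =>
    (genHom n g).1 kl.1 kl.2 - (1 : Matrix (Fin 2) (Fin 2) (QRing n)) kl.1 kl.2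

lemma ev_one_entry (ψ : FreeGroup (Fin n) →* FreeGroup (Fin 2)) (k l : Fin 2) :
    evalRH n ψ ((1 : Matrix (Fin 2) (Fin 2) (QRing n)) k l)
      = (1 : Matrix (Fin 2) (Fin 2) ℤ) k l := by
  by_cases hkl : k = l <;> simp [Matrix.one_apply, hkl]

lemma eqns_zero_iff (ψ : FreeGroup (Fin n) →* FreeGroup (Fin 2)) (g : FreeGroup (Fin n)) :
    (∀ x ∈ eqnsOf n g, evalRH n ψ x = 0) ↔ rho (ψ g) = 1 := by
  have hE : Matrix.SpecialLinearGroup.map (evalRH n ψ) (genHom n g) = rho (ψ g) := by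
    have := DFunLike.congr_fun (genHom_spec n ψ) g
    simpa using this
  have hcoe : ∀ k l : Fin 2, (Matrix.SpecialLinearGroup.map (evalRH n ψ) (genHom n g)).1 k l
      = evalRH n ψ ((genHom n g).1 k l) := by
    intro k l
    rw [Matrix.SpecialLinearGroup.map_apply_coe, RingHom.mapMatrix_apply, Matrix.map_apply]
  constructor
  · intro h
    rw [← hE]
    apply Subtype.ext
    rw [Matrix.SpecialLinearGroup.coe_one]
    ext k l
    rw [hcoe]
    have h2 := h _ ⟨(k, l), rfl⟩
    rw [_root_.map_sub, sub_eq_zero] at h2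
    rw [show ((genHom n g).1 (k,l).1 (k,l).2) = (genHom n g).1 k l from rfl] at h2
    rw [h2, ev_one_entry]
  · intro h x hx
    obtain ⟨⟨k, l⟩, rfl⟩ := hx
    rw [_root_.map_sub, sub_eq_zero]
    have h2 : (Matrix.SpecialLinearGroup.map (evalRH n ψ) (genHom n g)).1 k l
        = (1 : Matrix (Fin 2) (Fin 2) ℤ) k l := by
      rw [hE, h, Matrix.SpecialLinearGroup.coe_one]
    rw [hcoe] at h2
    rw [show ((genHom n g).1 (k,l).1 (k,l).2) = (genHom n g).1 k l from rfl, h2,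
      ev_one_entry n ψ k l]

/-- Equational noetherianity: a finite subset `N₀` of `N` discriminates all of `N`. -/
theorem exists_finite_discriminator (N : Subgroup (FreeGroup (Fin n))) :
    ∃ N₀ : Finset (FreeGroup (Fin n)), (↑N₀ : Set (FreeGroup (Fin n))) ⊆ ↑N ∧
      ∀ ψ : FreeGroup (Fin n) →* FreeGroup (Fin 2),
        (∀ h ∈ N₀, ψ h = 1) → ∀ g ∈ N, ψ g = 1 := by
  classical
  set S : Set (QRing n) := ⋃ g ∈ (N : Set (FreeGroup (Fin n))), eqnsOf n g with hS
  have hfg : (Ideal.span S).FG := IsNoetherian.noetherian _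
  obtain ⟨T, hTS, hle⟩ := span_fg_subset S hfg
  have hmem : ∀ t : T, ∃ g, g ∈ N ∧ (t : QRing n) ∈ eqnsOf n g := by
    intro t
    have := hTS t.2
    rw [hS] at this
    simpa using this
  choose gf hgf1 hgf2 using hmem
  refine ⟨T.attach.image gf, ?_, ?_⟩
  · intro x hx
    simp only [Finset.coe_image, Set.mem_image, Finset.mem_coe, Finset.mem_attach] at hx
    obtain ⟨t, -, rfl⟩ := hx
    exact hgf1 t
  · intro ψ hψ g hg
    -- T ⊆ ker (evalRH n ψ)
    have hker : ∀ t ∈ T, evalRH n ψ t = 0 := by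
      intro t ht
      have h1 : ψ (gf ⟨t, ht⟩) = 1 := hψ _ (Finset.mem_image.2 ⟨⟨t, ht⟩, Finset.mem_attach _ _, rfl⟩)
      have h2 : rho (ψ (gf ⟨t, ht⟩)) = 1 := by rw [h1, _root_.map_one]
      exact (eqns_zero_iff n ψ _).2 h2 t (hgf2 ⟨t, ht⟩)
    have hSker : ∀ x ∈ S, evalRH n ψ x = 0 := by
      intro x hx
      have hx' : x ∈ Ideal.span S := Ideal.subset_span hx
      have := hle hx'
      -- x ∈ span T ⊆ ker
      have hTk : Ideal.span (T : Set (QRing n)) ≤ RingHom.ker (evalRH n ψ) := by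
        rw [Ideal.span_le]
        intro y hy
        exact hker y hy
      exact hTk this
    have : ∀ x ∈ eqnsOf n g, evalRH n ψ x = 0 := by
      intro x hx
      apply hSker
      rw [hS]
      exact Set.mem_biUnion hg hx
    have hone : rho (ψ g) = 1 := (eqns_zero_iff n ψ g).1 this
    apply rho_injective
    rw [hone, _root_.map_one]
end Generic




lemma chi_eq_true {G : Type*} {s : Set G} {g : G} : chi s g = true ↔ g ∈ s := by
  unfold chi
  exact @decide_eq_true_iff _ (Classical.propDecidable _)

section Topo
variable (n : ℕ)
local notation "F" => FreeGroup (Fin n)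

lemma isClosed_true (a : F) : IsClosed {f : F → Bool | f a = true} := by
  have : {f : F → Bool | f a = true} = (fun f : F → Bool => f a) ⁻¹' {b | b = true} := rfl
  rw [this]
  exact (isClosed_discrete _).preimage (continuous_apply a)

lemma isClosed_nottrue (a : F) : IsClosed {f : F → Bool | ¬ f a = true} := by
  have : {f : F → Bool | ¬ f a = true} = (fun f : F → Bool => f a) ⁻¹' {b | ¬ b = true} :=
    rfl
  rw [this]
  exact (isClosed_discrete _).preimage (continuous_apply a)

lemma isClosed_imp2 (a b c : F) :
    IsClosed {f : F → Bool | f a = true → f b = true → f c = true} := by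
  have : {f : F → Bool | f a = true → f b = true → f c = true}
      = {f : F → Bool | ¬ f a = true} ∪ ({f : F → Bool | ¬ f b = true}
          ∪ {f : F → Bool | f c = true}) := by
    ext f
    simp only [Set.mem_setOf_eq, Set.mem_union]
    tauto
  rw [this]
  exact (isClosed_nottrue n a).union ((isClosed_nottrue n b).union (isClosed_true n c))

lemma isClosed_imp1 (a c : F) :
    IsClosed {f : F → Bool | f a = true → f c = true} := by
  have : {f : F → Bool | f a = true → f c = true}
      = {f : F → Bool | f a = true → f a = true → f c = true} := by
    ext f; simp only [Set.mem_setOf_eq]; tauto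
  rw [this]
  exact isClosed_imp2 n a a c

lemma GnSet_eq : GnSet n =
    ({f : F → Bool | f 1 = true} ∩
      ⋂ (a : F) (b : F), {f | f a = true → f b = true → f (a * b) = true}) ∩
    ((⋂ (a : F), {f : F → Bool | f a = true → f a⁻¹ = true}) ∩
      ⋂ (a : F) (g : F), {f | f a = true → f (g * a * g⁻¹) = true}) := by
  ext f
  constructor
  · rintro ⟨N, hN, rfl⟩
    refine ⟨⟨chi_eq_true.2 N.one_mem, ?_⟩, ?_, ?_⟩
    · simp only [Set.mem_iInter, Set.mem_setOf_eq]
      intro a b ha hb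
      exact chi_eq_true.2 (N.mul_mem (chi_eq_true.1 ha) (chi_eq_true.1 hb))
    · simp only [Set.mem_iInter, Set.mem_setOf_eq]
      intro a ha
      exact chi_eq_true.2 (N.inv_mem (chi_eq_true.1 ha))
    · simp only [Set.mem_iInter, Set.mem_setOf_eq]
      intro a g ha
      exact chi_eq_true.2 (hN.conj_mem a (chi_eq_true.1 ha) g)
  · rintro ⟨⟨h1, hmul⟩, hinv, hconj⟩
    simp only [Set.mem_iInter, Set.mem_setOf_eq] at h1 hmul hinv hconj
    refine ⟨{ carrier := {g : F | f g = true},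
              one_mem' := h1,
              mul_mem' := fun {a b} ha hb => hmul a b ha hb,
              inv_mem' := fun {a} ha => hinv a ha }, ⟨fun a ha g => hconj a g ha⟩, ?_⟩
    funext g
    rw [Bool.eq_iff_iff, chi_eq_true]
    exact Iff.rfl

lemma isClosed_GnSet : IsClosed (GnSet n) := by
  rw [GnSet_eq]
  refine IsClosed.inter (IsClosed.inter (isClosed_true n 1) ?_) (IsClosed.inter ?_ ?_)
  · exact isClosed_iInter fun a => isClosed_iInter fun b => isClosed_imp2 n a b (a * b)
  · exact isClosed_iInter fun a => isClosed_imp1 n a a⁻¹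
  · exact isClosed_iInter fun a => isClosed_iInter fun g => isClosed_imp1 n a (g * a * g⁻¹)

def CSet (T : Finset F) : Set (F → Bool) :=
  {f | ∃ ψ : F →* FreeGroup (Fin 2), ∀ t ∈ T, (f t = true ↔ ψ t = 1)}

lemma isClosed_CSet (T : Finset F) : IsClosed (CSet n T) := by
  have : CSet n T = (fun (f : F → Bool) (t : {x // x ∈ T}) => f t.1) ⁻¹'
      {p : {x // x ∈ T} → Bool |
        ∃ ψ : F →* FreeGroup (Fin 2), ∀ t : {x // x ∈ T}, (p t = true ↔ ψ t.1 = 1)} := by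
    ext f
    constructor
    · rintro ⟨ψ, h⟩; exact ⟨ψ, fun t => h t.1 t.2⟩
    · rintro ⟨ψ, h⟩; exact ⟨ψ, fun t ht => h ⟨t, ht⟩⟩
  rw [this]
  exact (isClosed_discrete _).preimage (continuous_pi fun t => continuous_apply t.1)
end Topo

section Main
variable (n : ℕ)
local notation "F" => FreeGroup (Fin n)

lemma LnSet_eq : LnSet n = GnSet n ∩ ⋂ (T : Finset F), CSet n T := by
  classical
  ext f
  constructor
  · rintro ⟨N, hN, hfrf, rfl⟩
    haveI := hN
    refine ⟨⟨N, hN, rfl⟩, ?_⟩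
    simp only [Set.mem_iInter]
    intro T
    obtain ⟨φ, hφ⟩ := hfrf (T.image (QuotientGroup.mk : F → F ⧸ N))
    refine ⟨φ.comp (QuotientGroup.mk' N), ?_⟩
    intro t ht
    constructor
    · intro hchi
      have htN : t ∈ N := chi_eq_true.1 hchi
      have : (QuotientGroup.mk t : F ⧸ N) = 1 := (QuotientGroup.eq_one_iff t).2 htN
      simp only [MonoidHom.comp_apply, QuotientGroup.mk'_apply]
      rw [this, _root_.map_one]
    · intro hψ
      by_contra hchi
      have htN : t ∉ N := fun h => hchi (chi_eq_true.2 h)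
      have hne : (QuotientGroup.mk t : F ⧸ N) ≠ 1 := fun h =>
        htN ((QuotientGroup.eq_one_iff t).1 h)
      have hmem : (QuotientGroup.mk t : F ⧸ N) ∈ T.image (QuotientGroup.mk : F → F ⧸ N) :=
        Finset.mem_image.2 ⟨t, ht, rfl⟩
      exact hφ _ hmem hne hψ
  · rintro ⟨⟨N, hN, rfl⟩, hT⟩
    haveI := hN
    simp only [Set.mem_iInter] at hT
    refine ⟨N, hN, ?_, rfl⟩
    intro S
    obtain ⟨N₀, hN₀sub, hdisc⟩ := exists_finite_discriminator n N
    set T : Finset F := N₀ ∪ S.image (fun s => Quotient.out s) with hTdef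
    obtain ⟨ψ, hψ⟩ := hT T
    have hker : ∀ h ∈ N₀, ψ h = 1 := by
      intro h hh
      refine (hψ h (Finset.mem_union_left _ hh)).1 ?_
      exact chi_eq_true.2 (hN₀sub hh)
    have hall : ∀ g ∈ N, ψ g = 1 := hdisc ψ hker
    have hle : N ≤ ψ.ker := fun g hg => hall g hg
    refine ⟨QuotientGroup.lift N ψ hle, ?_⟩
    intro s hs hs1
    have houtT : Quotient.out s ∈ T :=
      Finset.mem_union_right _ (Finset.mem_image.2 ⟨s, hs, rfl⟩)
    have hout : (QuotientGroup.mk (Quotient.out s) : F ⧸ N) = s := QuotientGroup.out_eq' s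
    have houtN : Quotient.out s ∉ N := by
      intro h
      exact hs1 (hout ▸ (QuotientGroup.eq_one_iff _).2 h)
    have hψs : ψ (Quotient.out s) ≠ 1 := by
      intro h
      exact houtN (chi_eq_true.1 ((hψ _ houtT).2 h))
    intro h
    apply hψs
    rw [← QuotientGroup.lift_mk' N hle (Quotient.out s), hout]
    exact h

lemma isClosed_LnSet : IsClosed (LnSet n) := by
  rw [LnSet_eq]
  exact (isClosed_GnSet n).inter (isClosed_iInter fun T => isClosed_CSet n T)
end Main

/-- `L_n` is closed in `G_n` (with the subspace topology); consequently `L_n` is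
a compact topological space. -/
theorem LnSet_isClosed_in_GnSet_and_compact (n : ℕ) (hn : 1 ≤ n) :
    IsClosed (Subtype.val ⁻¹' LnSet n : Set ↥(GnSet n)) ∧ IsCompact (LnSet n) := by
  exact ⟨(isClosed_LnSet n).preimage continuous_subtype_val, (isClosed_LnSet n).isCompact⟩
end
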